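/- Let M be a symmetric irreducible r×r 0–1 transition matrix and let A : Σ̂_M → ℝ be Lipschitz continuous. Suppose β_n → ∞, φ_{β_n}/β_n → V uniformly, and for a fixed y ∈ Σ*_M the effective probabilities μ_{y,β_n} converge weak* to μ_y^∞ ∈ M_σ. Then lim_{n→∞} λ_{β_n}/β_n = max_{μ ∈ M_σ} ∫_{Σ_M} ( A(y,x) + V(x) − V(y) ) dμ(x) = ∫_{Σ_M} ( A(y,x) + V(x) − V(y) ) dμ_y^∞(x). In particular this common value does not depend on the point y. -/

import Mathlib

open MeasureTheory Filter Topology Real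

/-- The one-sided subshift of finite type defined by the 0-1 transition matrix `M`:
sequences `x : ℕ → Fin r` with `M (x j) (x (j+1)) = 1` for all `j`. -/
abbrev Shift (r : ℕ) (M : Fin r → Fin r → Bool) : Type :=
  {x : ℕ → Fin r // ∀ j : ℕ, M (x j) (x (j + 1)) = true}

variable {r : ℕ} {M : Fin r → Fin r → Bool}

/-- The matrix `M` is irreducible: any symbol can be joined to any other by an
admissible path of positive length. -/
def Irred (M : Fin r → Fin r → Bool) : Prop :=
  ∀ i j : Fin r, ∃ n : ℕ, ∃ w : Fin (n + 2) → Fin r,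
    w 0 = i ∧ w (Fin.last (n + 1)) = j ∧
    ∀ k : Fin (n + 1), M (w k.castSucc) (w k.succ) = true

/-- The left shift map on the subshift. -/
def shiftMap (x : Shift r M) : Shift r M :=
  ⟨fun j => x.1 (j + 1), fun j => x.2 (j + 1)⟩

/-- The metric `d(x,y) = Λ^k`, `k = min { j : x_j ≠ y_j }`, `d(x,x) = 0`. -/
noncomputable def shiftDist (Λ : ℝ) (x y : Shift r M) : ℝ :=
  letI := Classical.decEq (Shift r M)
  if h : x = y then 0
  else Λ ^ Nat.find (show ∃ j : ℕ, x.1 j ≠ y.1 j by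
    by_contra hc
    push_neg at hc
    exact h (Subtype.ext (funext hc)))

/-- `φ` is Lipschitz with constant `K` for the metric `shiftDist Λ`. -/
def LipBnd (Λ K : ℝ) (φ : Shift r M → ℝ) : Prop :=
  ∀ x y : Shift r M, |φ x - φ y| ≤ K * shiftDist Λ x y

/-- `φ` is Lipschitz continuous for the metric `shiftDist Λ`. -/
def IsLip (Λ : ℝ) (φ : Shift r M → ℝ) : Prop :=
  ∃ K : ℝ, LipBnd Λ K φ

/-- The best Lipschitz constant of `φ`. -/
noncomputable def lipC (Λ : ℝ) (φ : Shift r M → ℝ) : ℝ :=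
  sInf {K : ℝ | 0 ≤ K ∧ LipBnd Λ K φ}

/-- The uniform norm `‖φ‖₀`. -/
noncomputable def unorm (φ : Shift r M → ℝ) : ℝ :=
  ⨆ x : Shift r M, |φ x|

/-- An observable on the natural extension `Σ̂_M ⊂ Σ*_M × Σ_M` (with `Σ*_M`
canonically identified with `Σ_M`), as a function of `(y, x)`; it is Lipschitz with
constant `K` for the max-metric. -/
def LipBnd2 (Λ K : ℝ) (A : Shift r M → Shift r M → ℝ) : Prop :=
  ∀ y x y' x' : Shift r M,
    |A y x - A y' x'| ≤ K * max (shiftDist Λ y y') (shiftDist Λ x x')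

/-- `A` is Lipschitz continuous on `Σ̂_M`. -/
def IsLip2 (Λ : ℝ) (A : Shift r M → Shift r M → ℝ) : Prop :=
  ∃ K : ℝ, LipBnd2 Λ K A

/-- The best Lipschitz constant of the observable `A`. -/
noncomputable def lipC2 (Λ : ℝ) (A : Shift r M → Shift r M → ℝ) : ℝ :=
  sInf {K : ℝ | 0 ≤ K ∧ LipBnd2 Λ K A}

/-- The uniform norm `‖A‖₀` of the observable. -/
noncomputable def unorm2 (A : Shift r M → Shift r M → ℝ) : ℝ :=
  ⨆ p : Shift r M × Shift r M, |A p.1 p.2|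

/-- `μ` is a `σ`-invariant Borel probability measure on the subshift. -/
def InvProb (μ : Measure (Shift r M)) : Prop :=
  IsProbabilityMeasure μ ∧ μ.map shiftMap = μ

/-- Entropy of the cylinder partition of length `n`:
`H_n(μ) = - ∑_{|w| = n} μ([w]) log μ([w])`. -/
noncomputable def cylEnt (μ : Measure (Shift r M)) (n : ℕ) : ℝ :=
  ∑ w : Fin n → Fin r,
    Real.negMulLog ((μ {x : Shift r M | ∀ i : Fin n, x.1 i.1 = w i}).toReal)

/-- The Kolmogorov–Sinai entropy `h_μ(σ)` of an invariant measure on the subshift: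
since the cylinder partition is generating and `n ↦ H_n(μ)` is subadditive,
`h_μ(σ) = lim_n H_n(μ)/n = inf_n H_n(μ)/n`. -/
noncomputable def entropy (μ : Measure (Shift r M)) : ℝ :=
  ⨅ n : ℕ, cylEnt μ (n + 1) / (n + 1)

/-- The operator
`G⁺_A(φ)(y) = sup_{μ ∈ M_σ} [ ∫ (A(y,x) + φ(x)) dμ(x) + h_μ(σ) ]`. -/
noncomputable def Gplus (A : Shift r M → Shift r M → ℝ)
    (φ : Shift r M → ℝ) (y : Shift r M) : ℝ :=
  sSup {t : ℝ | ∃ μ : Measure (Shift r M), InvProb μ ∧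
    t = ∫ x, (A y x + φ x) ∂μ + entropy μ}

/-- The maximal ergodic average `max_{μ ∈ M_σ} ∫ B dμ`. -/
noncomputable def maxErg (B : Shift r M → ℝ) : ℝ :=
  sSup {t : ℝ | ∃ μ : Measure (Shift r M), InvProb μ ∧ t = ∫ x, B x ∂μ}

/-- The quotient norm on functions modulo additive constants:
`‖g‖_c = inf_{γ ∈ ℝ} ‖g + γ‖₀`. -/
noncomputable def cnorm (g : Shift r M → ℝ) : ℝ :=
  ⨅ γ : ℝ, unorm (fun x => g x + γ)


section AuxLemmas

instance : OpensMeasurableSpace (Shift r M) :=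
  Subtype.opensMeasurableSpace {x : ℕ → Fin r | ∀ j : ℕ, M (x j) (x (j + 1)) = true}

lemma shiftDist_self (Λ : ℝ) (x : Shift r M) : shiftDist Λ x x = 0 := by
  simp [shiftDist]

lemma shiftDist_nonneg {Λ : ℝ} (h0 : 0 < Λ) (x y : Shift r M) : 0 ≤ shiftDist Λ x y := by
  unfold shiftDist
  split_ifs
  · exact le_rfl
  · positivity

lemma shiftDist_le_one {Λ : ℝ} (h0 : 0 < Λ) (h1 : Λ ≤ 1) (x y : Shift r M) :
    shiftDist Λ x y ≤ 1 := by
  unfold shiftDist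
  split_ifs
  · exact zero_le_one
  · exact pow_le_one₀ h0.le h1

lemma shiftDist_le_pow {Λ : ℝ} (h0 : 0 < Λ) (h1 : Λ ≤ 1) {x y : Shift r M} {k : ℕ}
    (h : ∀ j, j < k → x.1 j = y.1 j) : shiftDist Λ x y ≤ Λ ^ k := by
  unfold shiftDist
  split_ifs
  · positivity
  · apply pow_le_pow_of_le_one h0.le h1
    rw [Nat.le_find_iff]
    intro m hm
    push_neg
    exact h m hm

lemma lip_continuous {Λ : ℝ} (hΛ : Λ ∈ Set.Ioo (0:ℝ) 1) {K : ℝ} {f : Shift r M → ℝ}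
    (hf : LipBnd Λ K f) : Continuous f := by
  rw [continuous_iff_continuousAt]
  intro x
  rw [ContinuousAt, Metric.tendsto_nhds]
  intro ε hε
  obtain ⟨k, hk⟩ : ∃ k : ℕ, |K| * Λ ^ k < ε := by
    have h := (tendsto_pow_atTop_nhds_zero_of_lt_one hΛ.1.le hΛ.2).const_mul |K|
    rw [mul_zero] at h
    exact (h.eventually (gt_mem_nhds hε)).exists
  have hopen : IsOpen {z : Shift r M | ∀ j, j < k → z.1 j = x.1 j} := by
    have he : {z : Shift r M | ∀ j, j < k → z.1 j = x.1 j}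
        = ⋂ j ∈ Finset.range k, {z : Shift r M | z.1 j = x.1 j} := by
      ext z; simp [Finset.mem_range]
    rw [he]
    apply isOpen_biInter_finset
    intro j _
    have hc : Continuous fun z : Shift r M => z.1 j :=
      (continuous_apply j).comp continuous_subtype_val
    exact hc.isOpen_preimage {x.1 j} (isOpen_discrete _)
  filter_upwards [hopen.mem_nhds (by intro j _; rfl)] with z hz
  rw [Real.dist_eq]
  calc |f z - f x| ≤ K * shiftDist Λ z x := hf z x
    _ ≤ |K| * shiftDist Λ z x :=
        mul_le_mul_of_nonneg_right (le_abs_self K) (shiftDist_nonneg hΛ.1 _ _)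
    _ ≤ |K| * Λ ^ k := mul_le_mul_of_nonneg_left
        (shiftDist_le_pow hΛ.1 hΛ.2.le fun j hj => hz j hj) (abs_nonneg K)
    _ < ε := hk

lemma lip_bound {Λ : ℝ} (hΛ : Λ ∈ Set.Ioo (0:ℝ) 1) {K : ℝ} {f : Shift r M → ℝ}
    (hf : LipBnd Λ K f) (x₀ : Shift r M) : ∀ x, |f x| ≤ |f x₀| + |K| := by
  intro x
  have h1 : |f x - f x₀| ≤ |K| := by
    calc |f x - f x₀| ≤ K * shiftDist Λ x x₀ := hf x x₀
      _ ≤ |K| * 1 := mul_le_mul (le_abs_self K) (shiftDist_le_one hΛ.1 hΛ.2.le _ _)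
          (shiftDist_nonneg hΛ.1 _ _) (abs_nonneg K)
      _ = |K| := mul_one _
  have h2 : |f x| ≤ |f x - f x₀| + |f x₀| := by
    have := abs_add_le (f x - f x₀) (f x₀)
    simpa using this
  linarith

lemma integrable_of_bdd {μ : Measure (Shift r M)} [IsFiniteMeasure μ] {f : Shift r M → ℝ}
    (hm : AEStronglyMeasurable f μ) {C : ℝ} (hC : ∀ x, |f x| ≤ C) : Integrable f μ :=
  Integrable.mono' (integrable_const C) hm
    (Filter.Eventually.of_forall fun x => by simpa [Real.norm_eq_abs] using hC x)

lemma negMulLog_le_one' {x : ℝ} (h0 : 0 ≤ x) : Real.negMulLog x ≤ 1 := by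
  rcases h0.eq_or_lt with h | h
  · simp [← h, Real.negMulLog_zero]
  · have h1 := Real.log_le_sub_one_of_pos (inv_pos.2 h)
    rw [Real.log_inv] at h1
    have h2 : x * x⁻¹ = 1 := mul_inv_cancel₀ h.ne'
    simp only [Real.negMulLog]
    nlinarith

lemma cylEnt_nonneg {μ : Measure (Shift r M)} (hp : IsProbabilityMeasure μ) (n : ℕ) :
    0 ≤ cylEnt μ n :=
  Finset.sum_nonneg fun w _ => Real.negMulLog_nonneg ENNReal.toReal_nonneg
    (by simpa using ENNReal.toReal_mono ENNReal.one_ne_top (prob_le_one (μ := μ)))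

lemma entropy_nonneg {μ : Measure (Shift r M)} (hp : IsProbabilityMeasure μ) :
    0 ≤ entropy μ :=
  le_ciInf fun n => div_nonneg (cylEnt_nonneg hp _) (by positivity)

lemma entropy_le_card {μ : Measure (Shift r M)} (hp : IsProbabilityMeasure μ) :
    entropy μ ≤ (r : ℝ) := by
  have hb : BddBelow (Set.range fun n : ℕ => cylEnt μ (n + 1) / (n + 1)) :=
    ⟨0, by rintro t ⟨n, rfl⟩; exact div_nonneg (cylEnt_nonneg hp _) (by positivity)⟩
  have h0 : entropy μ ≤ cylEnt μ (0 + 1) / ((0 : ℕ) + 1) := ciInf_le hb 0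
  have h1 : cylEnt μ 1 ≤ (r : ℝ) := by
    calc cylEnt μ 1 ≤ ∑ _w : Fin 1 → Fin r, (1 : ℝ) :=
          Finset.sum_le_sum fun w _ => negMulLog_le_one' ENNReal.toReal_nonneg
      _ = (r : ℝ) := by simp
  calc entropy μ ≤ cylEnt μ (0 + 1) / ((0 : ℕ) + 1) := h0
    _ = cylEnt μ 1 := by norm_num
    _ ≤ (r : ℝ) := h1

end AuxLemmas

/-- Suppose `β_n → ∞`, `φ_{β_n}/β_n → V` uniformly, and for a fixed
`y` the effective probabilities `μ_{y,β_n}` converge weak* to `ν ∈ M_σ`. Then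
`λ_{β_n}/β_n → max_{μ ∈ M_σ} ∫ (A(y,x) + V(x) − V(y)) dμ(x)
            = ∫ (A(y,x) + V(x) − V(y)) dν(x)`
(in particular this common value does not depend on `y`). -/
theorem effective_constant_limit_formula
    (r : ℕ) (hr : 2 ≤ r) (M : Fin r → Fin r → Bool)
    (hSym : ∀ i j, M i j = M j i) (hIrr : Irred M)
    (Λ : ℝ) (hΛ : Λ ∈ Set.Ioo (0 : ℝ) 1)
    (A : Shift r M → Shift r M → ℝ) (hA : IsLip2 Λ A)
    (φ : ℝ → Shift r M → ℝ) (lam : ℝ → ℝ)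
    (heff : ∀ β > (0 : ℝ), IsLip Λ (φ β) ∧
      ∀ y, Gplus (fun y x => β * A y x) (φ β) y = φ β y + lam β)
    (b : ℕ → ℝ) (hb : ∀ n, 0 < b n) (hbtop : Filter.Tendsto b Filter.atTop Filter.atTop)
    (V : Shift r M → ℝ)
    (hV : TendstoUniformly (fun n x => φ (b n) x / b n) V Filter.atTop)
    (y : Shift r M)
    (μseq : ℕ → Measure (Shift r M))
    (hμ : ∀ n, InvProb (μseq n) ∧
      ∫ x, (b n * A y x + φ (b n) x) ∂(μseq n) + entropy (μseq n)
        = Gplus (fun y x => b n * A y x) (φ (b n)) y)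
    (ν : Measure (Shift r M)) (hν : InvProb ν)
    (hconv : ∀ f : Shift r M → ℝ, Continuous f →
      Filter.Tendsto (fun n => ∫ x, f x ∂(μseq n)) Filter.atTop (𝓝 (∫ x, f x ∂ν))) :
    Filter.Tendsto (fun n => lam (b n) / b n) Filter.atTop
      (𝓝 (∫ x, (A y x + V x - V y) ∂ν)) ∧
    ∫ x, (A y x + V x - V y) ∂ν =
      sSup {t : ℝ | ∃ μ : Measure (Shift r M), InvProb μ ∧
        t = ∫ x, (A y x + V x - V y) ∂μ} := by
  obtain ⟨hΛ0, hΛ1⟩ := hΛ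
  obtain ⟨KA, hKA⟩ := hA
  -- `A y ·` is Lipschitz, continuous, bounded
  have hAy : LipBnd Λ KA (A y) := by
    intro x x'
    have h := hKA y x y x'
    rwa [shiftDist_self, max_eq_right (shiftDist_nonneg hΛ0 _ _)] at h
  have hAyC : Continuous (A y) := lip_continuous ⟨hΛ0, hΛ1⟩ hAy
  set CA : ℝ := |A y y| + |KA| with hCA
  have hAyB : ∀ x, |A y x| ≤ CA := lip_bound ⟨hΛ0, hΛ1⟩ hAy y
  -- each `φ (b n)` is Lipschitz, continuous, bounded
  have hφn : ∀ n : ℕ, ∃ K, LipBnd Λ K (φ (b n)) := fun n => (heff (b n) (hb n)).1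
  choose Kφ hKφ using hφn
  have hφC : ∀ n, Continuous (φ (b n)) := fun n => lip_continuous ⟨hΛ0, hΛ1⟩ (hKφ n)
  have hφB : ∀ n x, |φ (b n) x| ≤ |φ (b n) y| + |Kφ n| := fun n => lip_bound ⟨hΛ0, hΛ1⟩ (hKφ n) y
  -- `V` is continuous and bounded
  have hFc : ∀ n : ℕ, Continuous fun x => φ (b n) x / b n := fun n => (hφC n).div_const _
  have hVC : Continuous V := hV.continuous (Filter.Eventually.of_forall hFc).frequently
  obtain ⟨n₀, hn₀⟩ := (Metric.tendstoUniformly_iff.1 hV 1 one_pos).exists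
  have hVB : ∀ x, |V x| ≤ (|φ (b n₀) y| + |Kφ n₀|) / b n₀ + 1 := by
    intro x
    have h1 := hn₀ x
    rw [Real.dist_eq] at h1
    have h2 : |φ (b n₀) x / b n₀| ≤ (|φ (b n₀) y| + |Kφ n₀|) / b n₀ := by
      rw [abs_div, abs_of_pos (hb n₀)]
      gcongr
      · exact (hb n₀).le
      · exact hφB n₀ x
    have h3 : |V x| ≤ |V x - φ (b n₀) x / b n₀| + |φ (b n₀) x / b n₀| := by
      have := abs_add_le (V x - φ (b n₀) x / b n₀) (φ (b n₀) x / b n₀)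
      simpa using this
    linarith
  -- integrability
  have hprob : ∀ n, IsProbabilityMeasure (μseq n) := fun n => (hμ n).1.1
  have intA : ∀ μ : Measure (Shift r M), IsProbabilityMeasure μ → Integrable (A y) μ := by
    intro μ h
    haveI := h
    exact integrable_of_bdd hAyC.measurable.aestronglyMeasurable hAyB
  have intφ : ∀ (n : ℕ) (μ : Measure (Shift r M)), IsProbabilityMeasure μ →
      Integrable (φ (b n)) μ := by
    intro n μ h
    haveI := h
    exact integrable_of_bdd (hφC n).measurable.aestronglyMeasurable (hφB n)
  have intV : ∀ μ : Measure (Shift r M), IsProbabilityMeasure μ → Integrable V μ := by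
    intro μ h
    haveI := h
    exact integrable_of_bdd hVC.measurable.aestronglyMeasurable hVB
  -- splitting of the integral
  have split : ∀ (n : ℕ) (μ : Measure (Shift r M)), IsProbabilityMeasure μ →
      (∫ x, (b n * A y x + φ (b n) x) ∂μ + entropy μ - φ (b n) y) / b n
        = ∫ x, A y x ∂μ + ∫ x, (φ (b n) x / b n) ∂μ + entropy μ / b n - φ (b n) y / b n := by
    intro n μ h
    haveI := h
    have e1 : ∫ x, (b n * A y x + φ (b n) x) ∂μ
        = b n * ∫ x, A y x ∂μ + ∫ x, φ (b n) x ∂μ := by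
      rw [integral_add ((intA μ h).const_mul (b n)) (intφ n μ h), integral_const_mul]
    have e2 : ∫ x, (φ (b n) x / b n) ∂μ = (∫ x, φ (b n) x ∂μ) / b n := integral_div _ _
    have hbne : b n ≠ 0 := (hb n).ne'
    rw [e1, e2]
    field_simp
  -- the key identity
  have keyn : ∀ n, lam (b n) / b n
      = ∫ x, A y x ∂(μseq n) + ∫ x, (φ (b n) x / b n) ∂(μseq n)
        + entropy (μseq n) / b n - φ (b n) y / b n := by
    intro n
    have e3 : ∫ x, (b n * A y x + φ (b n) x) ∂(μseq n) + entropy (μseq n)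
        = φ (b n) y + lam (b n) := by
      rw [(hμ n).2, (heff (b n) (hb n)).2 y]
    rw [← split n (μseq n) (hprob n)]
    have hbne : b n ≠ 0 := (hb n).ne'
    field_simp
    linarith
  -- convergence of ∫ φ_n / b_n against a sequence of measures
  have TI : ∀ (μs : ℕ → Measure (Shift r M)), (∀ n, IsProbabilityMeasure (μs n)) →
      ∀ L : ℝ, Filter.Tendsto (fun n => ∫ x, V x ∂(μs n)) Filter.atTop (𝓝 L) →
      Filter.Tendsto (fun n => ∫ x, (φ (b n) x / b n) ∂(μs n)) Filter.atTop (𝓝 L) := by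
    intro μs hμs L hlim
    have hdiff : Filter.Tendsto
        (fun n => ∫ x, (φ (b n) x / b n) ∂(μs n) - ∫ x, V x ∂(μs n))
        Filter.atTop (𝓝 0) := by
      rw [NormedAddCommGroup.tendsto_nhds_zero]
      intro ε hε
      filter_upwards [Metric.tendstoUniformly_iff.1 hV (ε / 2) (by positivity)] with n hn
      haveI := hμs n
      have hint1 : Integrable (fun x => φ (b n) x / b n) (μs n) :=
        (intφ n (μs n) (hμs n)).div_const _
      have hint2 : Integrable V (μs n) := intV (μs n) (hμs n)
      rw [← integral_sub hint1 hint2]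
      have hbnd : ‖∫ x, (φ (b n) x / b n - V x) ∂(μs n)‖ ≤ (ε / 2) * (μs n Set.univ).toReal :=
        norm_integral_le_of_norm_le_const (Filter.Eventually.of_forall fun x => by
          have h := hn x
          rw [Real.dist_eq] at h
          rw [Real.norm_eq_abs, abs_sub_comm]
          linarith)
      rw [measure_univ, ENNReal.toReal_one, mul_one] at hbnd
      linarith
    have h := hdiff.add hlim
    rw [zero_add] at h
    exact h.congr fun n => by ring
  -- the four limits
  have T1 := hconv (A y) hAyC
  have T2 := TI μseq hprob _ (hconv V hVC)
  have T3 : Filter.Tendsto (fun n => entropy (μseq n) / b n) Filter.atTop (𝓝 0) := by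
    apply squeeze_zero_norm (a := fun n => (r : ℝ) / b n)
    · intro n
      rw [Real.norm_eq_abs, abs_div, abs_of_pos (hb n),
        abs_of_nonneg (entropy_nonneg (hprob n))]
      gcongr
      · exact (hb n).le
      · exact entropy_le_card (hprob n)
    · exact tendsto_const_nhds.div_atTop hbtop
  have T4 : Filter.Tendsto (fun n => φ (b n) y / b n) Filter.atTop (𝓝 (V y)) :=
    hV.tendsto_at y
  have Tlam : Filter.Tendsto (fun n => lam (b n) / b n) Filter.atTop
      (𝓝 (∫ x, A y x ∂ν + ∫ x, V x ∂ν + 0 - V y)) := by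
    have h := ((T1.add T2).add T3).sub T4
    exact h.congr fun n => (keyn n).symm
  -- identify the limit
  have Lval : ∀ μ : Measure (Shift r M), IsProbabilityMeasure μ →
      ∫ x, (A y x + V x - V y) ∂μ = ∫ x, A y x ∂μ + ∫ x, V x ∂μ + 0 - V y := by
    intro μ h
    haveI := h
    have h1 : ∫ x, (A y x + V x - V y) ∂μ
        = ∫ x, (A y x + V x) ∂μ - ∫ _x, V y ∂μ :=
      integral_sub ((intA μ h).add (intV μ h)) (integrable_const _)
    rw [h1, integral_add (intA μ h) (intV μ h), integral_const]
    simp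
  have Tlam' : Filter.Tendsto (fun n => lam (b n) / b n) Filter.atTop
      (𝓝 (∫ x, (A y x + V x - V y) ∂ν)) := by
    rw [Lval ν hν.1]
    exact Tlam
  refine ⟨Tlam', ?_⟩
  -- upper-bound property
  have hub : ∀ t ∈ {t : ℝ | ∃ μ : Measure (Shift r M), InvProb μ ∧
      t = ∫ x, (A y x + V x - V y) ∂μ}, t ≤ ∫ x, (A y x + V x - V y) ∂ν := by
    rintro t ⟨μ, hμi, rfl⟩
    have hle : ∀ n, ∫ x, A y x ∂μ + ∫ x, (φ (b n) x / b n) ∂μ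
        + entropy μ / b n - φ (b n) y / b n ≤ lam (b n) / b n := by
      intro n
      have hbdd : BddAbove {t : ℝ | ∃ μ' : Measure (Shift r M), InvProb μ' ∧
          t = ∫ x, ((fun y x => b n * A y x) y x + φ (b n) x) ∂μ' + entropy μ'} := by
        refine ⟨b n * CA + (|φ (b n) y| + |Kφ n|) + r, ?_⟩
        rintro s ⟨μ', hμ', rfl⟩
        haveI := hμ'.1
        have hint : ‖∫ x, (b n * A y x + φ (b n) x) ∂μ'‖
            ≤ (b n * CA + (|φ (b n) y| + |Kφ n|)) * (μ' Set.univ).toReal :=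
          norm_integral_le_of_norm_le_const (Filter.Eventually.of_forall fun x => by
            rw [Real.norm_eq_abs]
            calc |b n * A y x + φ (b n) x| ≤ |b n * A y x| + |φ (b n) x| := abs_add_le _ _
              _ ≤ b n * CA + (|φ (b n) y| + |Kφ n|) := by
                  rw [abs_mul, abs_of_pos (hb n)]
                  exact add_le_add (mul_le_mul_of_nonneg_left (hAyB x) (hb n).le) (hφB n x)
            )
        rw [measure_univ, ENNReal.toReal_one, mul_one, Real.norm_eq_abs] at hint
        have hent := entropy_le_card (r := r) (M := M) hμ'.1
        have habs := le_abs_self (∫ x, (b n * A y x + φ (b n) x) ∂μ')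
        simp only []
        linarith
      have h1 : ∫ x, (b n * A y x + φ (b n) x) ∂μ + entropy μ
          ≤ Gplus (fun y x => b n * A y x) (φ (b n)) y := by
        unfold Gplus
        exact le_csSup hbdd ⟨μ, hμi, rfl⟩
      rw [(heff (b n) (hb n)).2 y] at h1
      have h2 : (∫ x, (b n * A y x + φ (b n) x) ∂μ + entropy μ - φ (b n) y) / b n
          ≤ lam (b n) / b n := by
        gcongr
        · exact (hb n).le
        · linarith
      calc ∫ x, A y x ∂μ + ∫ x, (φ (b n) x / b n) ∂μ + entropy μ / b n - φ (b n) y / b n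
          = (∫ x, (b n * A y x + φ (b n) x) ∂μ + entropy μ - φ (b n) y) / b n :=
            (split n μ hμi.1).symm
        _ ≤ lam (b n) / b n := h2
    have hLHS : Filter.Tendsto (fun n => ∫ x, A y x ∂μ + ∫ x, (φ (b n) x / b n) ∂μ
        + entropy μ / b n - φ (b n) y / b n) Filter.atTop
        (𝓝 (∫ x, A y x ∂μ + ∫ x, V x ∂μ + 0 - V y)) := by
      have hT2 := TI (fun _ => μ) (fun _ => hμi.1) (∫ x, V x ∂μ) tendsto_const_nhds
      have hT3 : Filter.Tendsto (fun n => entropy μ / b n) Filter.atTop (𝓝 0) :=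
        tendsto_const_nhds.div_atTop hbtop
      exact ((tendsto_const_nhds.add hT2).add hT3).sub (hV.tendsto_at y)
    have := le_of_tendsto_of_tendsto' hLHS Tlam' hle
    rwa [← Lval μ hμi.1] at this
  exact le_antisymm
    (le_csSup ⟨_, hub⟩ ⟨ν, hν, rfl⟩)
    (csSup_le ⟨_, ν, hν, rfl⟩ hub)
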